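/- arXiv:1812.02746 — 2 statements merged into one kernel-verified Lean document; each statement's English description precedes it below -/
import Mathlib

section
/- Fix n : ℕ with n ≥ 1 and γ : ℝ. Work with complex matrices indexed by bitstrings z : Fin n → Bool; let B' = ∑ i, X_i be the mixer sum, let R be the diagonal matrix with R z z = |z| (the Hamming weight of z, as a complex number), and let u be the uniform vector with u z = 2^(-(n:ℝ)/2). Let ψ_f = (Matrix.exp (I·(π/4)·B') * Matrix.exp (-I·γ·R)).mulVec u. Then for every z : Fin n → Bool, ψ_f z = ∏ i, a (z i), where a false = (1 + I·exp(-I·γ))/2 and a true = (I + exp(-I·γ))/2. -/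
open Matrix Complex

/-- The bit-flip (Pauli X on qubit `i`) matrix on `n`-bit strings. -/
noncomputable def pauliX (n : ℕ) (i : Fin n) :
    Matrix (Fin n → Bool) (Fin n → Bool) ℂ :=
  Matrix.of fun z z' => if z' = Function.update z i (!(z i)) then 1 else 0

/-- The Hamming weight of a bitstring: the number of `true` bits. -/
def hammingWeight {n : ℕ} (z : Fin n → Bool) : ℕ :=
  (Finset.univ.filter fun i => z i = true).card

section Aux

lemma pauliX_flip_flip {n : ℕ} (i : Fin n) (z : Fin n → Bool) :
    Function.update (Function.update z i (!(z i))) i (!(Function.update z i (!(z i)) i)) = z := by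
  simp [Function.update_idem]

lemma pauliX_symm {n : ℕ} (i : Fin n) (z z' : Fin n → Bool) :
    pauliX n i z z' = pauliX n i z' z := by
  simp only [pauliX, Matrix.of_apply]
  congr 1
  apply propext
  constructor
  · rintro rfl; exact (pauliX_flip_flip i z).symm
  · rintro rfl; exact (pauliX_flip_flip i z').symm

lemma pauliX_mulVec {n : ℕ} (i : Fin n) (v : (Fin n → Bool) → ℂ) (z : Fin n → Bool) :
    (pauliX n i).mulVec v z = v (Function.update z i (!(z i))) := by
  simp [pauliX, Matrix.mulVec, dotProduct, ite_mul, Finset.sum_ite_eq']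

lemma pauliX_mul {n : ℕ} (i : Fin n) (M : Matrix (Fin n → Bool) (Fin n → Bool) ℂ)
    (z z' : Fin n → Bool) :
    (pauliX n i * M) z z' = M (Function.update z i (!(z i))) z' := by
  rw [Matrix.mul_apply]
  simp [pauliX, ite_mul, Finset.sum_ite_eq']

lemma pauliX_sq {n : ℕ} (i : Fin n) : pauliX n i ^ 2 = 1 := by
  ext z z'
  rw [pow_two, pauliX_mul]
  simp only [pauliX, Matrix.of_apply, pauliX_flip_flip, Matrix.one_apply]
  simp [eq_comm]

lemma pauliX_comm {n : ℕ} (i j : Fin n) : Commute (pauliX n i) (pauliX n j) := by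
  rcases eq_or_ne i j with rfl | hij
  · exact Commute.refl _
  · show _ = _
    ext z z'
    rw [pauliX_mul, pauliX_mul]
    simp only [pauliX, Matrix.of_apply]
    rw [Function.update_of_ne hij.symm, Function.update_of_ne hij,
      Function.update_comm hij]

open NormedSpace in
lemma exp_smul_of_sq_eq_one {A : Type*} [NormedRing A] [NormedAlgebra ℂ A] [CompleteSpace A]
    (x : A) (hx : x ^ 2 = 1) (c : ℂ) :
    exp (c • x) = Complex.cosh c • (1 : A) + Complex.sinh c • x := by
  rw [exp_eq_tsum ℂ]
  refine HasSum.tsum_eq (HasSum.even_add_odd ?_ ?_)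
  · have h := (Complex.hasSum_cosh c).smul_const (1 : A)
    convert h using 2 with k
    rw [smul_pow, pow_mul x 2 k, hx, one_pow, smul_smul, div_eq_inv_mul]
  · have h := (Complex.hasSum_sinh c).smul_const x
    convert h using 2 with k
    rw [smul_pow, pow_succ x, pow_mul x 2 k, hx, one_pow, one_mul, smul_smul, div_eq_inv_mul]

lemma exp_smul_pauliX {n : ℕ} (c : ℂ) (i : Fin n) :
    NormedSpace.exp (c • pauliX n i)
      = Complex.cosh c • (1 : Matrix (Fin n → Bool) (Fin n → Bool) ℂ)
        + Complex.sinh c • pauliX n i := by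
  letI : SeminormedRing (Matrix (Fin n → Bool) (Fin n → Bool) ℂ) := Matrix.linftyOpSemiNormedRing
  letI : NormedRing (Matrix (Fin n → Bool) (Fin n → Bool) ℂ) := Matrix.linftyOpNormedRing
  letI : NormedAlgebra ℂ (Matrix (Fin n → Bool) (Fin n → Bool) ℂ) := Matrix.linftyOpNormedAlgebra
  exact exp_smul_of_sq_eq_one _ (pauliX_sq i) c

/-- Product vector built from single-qubit amplitudes. -/
noncomputable def qaoaPV {n : ℕ} (f : Fin n → Bool → ℂ) : (Fin n → Bool) → ℂ :=
  fun z => ∏ i, f i (z i)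

/-- One layer of the mixer on qubit `i`. -/
noncomputable def mixM {n : ℕ} (c : ℂ) (i : Fin n) :
    Matrix (Fin n → Bool) (Fin n → Bool) ℂ :=
  Complex.cosh c • 1 + Complex.sinh c • pauliX n i

lemma mix_commute {n : ℕ} (c : ℂ) (i j : Fin n) : Commute (mixM c i) (mixM c j) := by
  unfold mixM
  apply Commute.add_left <;> apply Commute.add_right <;>
    (apply Commute.smul_left; apply Commute.smul_right) <;>
    first
      | exact Commute.one_left _
      | exact Commute.one_right _
      | exact pauliX_comm i j

lemma single_site {n : ℕ} (a : Fin n) (s t : ℂ) (g : Fin n → Bool → ℂ) :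
    (s • (1 : Matrix (Fin n → Bool) (Fin n → Bool) ℂ) + t • pauliX n a).mulVec (qaoaPV g)
      = qaoaPV (Function.update g a (fun b => s * g a b + t * g a (!b))) := by
  funext z
  have key : ∀ (h : Bool → ℂ), qaoaPV (Function.update g a h) z
      = h (z a) * ∏ i ∈ Finset.univ.erase a, g i (z i) := by
    intro h
    have : ∀ i ∈ Finset.univ.erase a, Function.update g a h i (z i) = g i (z i) := by
      intro i hi
      rw [Function.update_of_ne (Finset.ne_of_mem_erase hi)]
    rw [qaoaPV, ← Finset.mul_prod_erase Finset.univ _ (Finset.mem_univ a),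
      Function.update_self, Finset.prod_congr rfl this]
  have hflip : qaoaPV g (Function.update z a (!(z a)))
      = g a (!(z a)) * ∏ i ∈ Finset.univ.erase a, g i (z i) := by
    have : ∀ i ∈ Finset.univ.erase a, g i (Function.update z a (!(z a)) i) = g i (z i) := by
      intro i hi
      rw [Function.update_of_ne (Finset.ne_of_mem_erase hi)]
    rw [qaoaPV, ← Finset.mul_prod_erase Finset.univ _ (Finset.mem_univ a),
      Function.update_self, Finset.prod_congr rfl this]
  have hid : qaoaPV g z = g a (z a) * ∏ i ∈ Finset.univ.erase a, g i (z i) :=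
    (Finset.mul_prod_erase Finset.univ _ (Finset.mem_univ a)).symm
  rw [Matrix.add_mulVec, Matrix.smul_mulVec, Matrix.smul_mulVec, Matrix.one_mulVec]
  show s * qaoaPV g z + t * (pauliX n a).mulVec (qaoaPV g) z = _
  rw [pauliX_mulVec, key, hflip, hid]
  ring

lemma mix_prod_mulVec {n : ℕ} (c : ℂ) (S : Finset (Fin n)) (f : Fin n → Bool → ℂ) :
    (S.noncommProd (mixM c) (fun i _ j _ _ => mix_commute c i j)).mulVec (qaoaPV f)
      = qaoaPV (fun i => if i ∈ S then
          (fun b => Complex.cosh c * f i b + Complex.sinh c * f i (!b)) else f i) := by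
  classical
  induction S using Finset.induction_on with
  | empty =>
    show (1 : Matrix (Fin n → Bool) (Fin n → Bool) ℂ).mulVec (qaoaPV f) = _
    rw [Matrix.one_mulVec]; simp
  | insert a s ha ih =>
    rw [show (insert a s).noncommProd (mixM c) (fun i _ j _ _ => mix_commute c i j)
        = mixM c a * s.noncommProd (mixM c) (fun i _ j _ _ => mix_commute c i j) from
        Finset.noncommProd_insert_of_notMem _ _ _ _ ha, ← Matrix.mulVec_mulVec, ih, mixM,
      single_site]
    refine congrArg qaoaPV ?_
    funext i
    rcases eq_or_ne i a with rfl | hia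
    · simp [Function.update_self, ha, if_neg ha]
    · simp [Function.update_of_ne hia, Finset.mem_insert, hia]

lemma half_fact : ((Real.sqrt 2 / 2 : ℝ) : ℂ) * (((2:ℝ) ^ (-(1:ℝ)/2) : ℝ) : ℂ) = 1/2 := by
  have h : (Real.sqrt 2 / 2) * ((2:ℝ) ^ (-(1:ℝ)/2)) = 1/2 := by
    have h2 : (0:ℝ) < 2 := by norm_num
    rw [show (-(1:ℝ)/2) = -(1/2 : ℝ) by ring, Real.rpow_neg h2.le, ← Real.sqrt_eq_rpow]
    have hs : Real.sqrt 2 ≠ 0 := by positivity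
    rw [div_mul_eq_mul_div, mul_inv_cancel₀ hs]
  calc ((Real.sqrt 2 / 2 : ℝ) : ℂ) * (((2:ℝ) ^ (-(1:ℝ)/2) : ℝ) : ℂ)
      = (((Real.sqrt 2 / 2) * ((2:ℝ) ^ (-(1:ℝ)/2)) : ℝ) : ℂ) := by push_cast; ring
    _ = 1/2 := by rw [h]; norm_num

lemma pow_half_fact (n : ℕ) :
    (((2:ℝ) ^ (-(n:ℝ)/2) : ℝ) : ℂ) = ((((2:ℝ) ^ (-(1:ℝ)/2) : ℝ) : ℂ)) ^ n := by
  have h : (2:ℝ) ^ (-(n:ℝ)/2) = ((2:ℝ) ^ (-(1:ℝ)/2)) ^ n := by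
    rw [← Real.rpow_natCast ((2:ℝ) ^ (-(1:ℝ)/2)) n, ← Real.rpow_mul (by norm_num : (0:ℝ) ≤ 2)]
    ring_nf
  rw [h]; push_cast; ring

lemma cosh_I_pi4 : Complex.cosh (Complex.I * ((Real.pi : ℂ) / 4)) = ((Real.sqrt 2 / 2 : ℝ) : ℂ) := by
  rw [mul_comm, Complex.cosh_mul_I,
    show ((Real.pi : ℂ)/4) = ((Real.pi/4 : ℝ) : ℂ) by push_cast; ring,
    ← Complex.ofReal_cos, Real.cos_pi_div_four]

lemma sinh_I_pi4 :
    Complex.sinh (Complex.I * ((Real.pi : ℂ) / 4)) = ((Real.sqrt 2 / 2 : ℝ) : ℂ) * Complex.I := by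
  rw [mul_comm, Complex.sinh_mul_I,
    show ((Real.pi : ℂ)/4) = ((Real.pi/4 : ℝ) : ℂ) by push_cast; ring,
    ← Complex.ofReal_sin, Real.sin_pi_div_four]

end Aux

/-- The QAOA1 output state on the pure Hamming ramp is an exact product state,
with explicit single-qubit amplitudes. -/
theorem qaoa1_ramp_product_state (n : ℕ) (hn : 1 ≤ n) (γ : ℝ)
    (B' R : Matrix (Fin n → Bool) (Fin n → Bool) ℂ)
    (hB' : B' = ∑ i, pauliX n i)
    (hR : R = Matrix.diagonal fun z => (hammingWeight z : ℂ))
    (u : (Fin n → Bool) → ℂ)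
    (hu : u = fun _ => (((2 : ℝ) ^ (-(n : ℝ) / 2) : ℝ) : ℂ))
    (ψf : (Fin n → Bool) → ℂ)
    (hψf : ψf = (NormedSpace.exp ((Complex.I * ((Real.pi : ℂ) / 4)) • B') *
        NormedSpace.exp ((-Complex.I * (γ : ℂ)) • R)).mulVec u)
    (a : Bool → ℂ)
    (ha_false : a false = (1 + Complex.I * Complex.exp (-Complex.I * γ)) / 2)
    (ha_true : a true = (Complex.I + Complex.exp (-Complex.I * γ)) / 2) :
    ∀ z : Fin n → Bool, ψf z = ∏ i, a (z i) := by
  classical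
  intro z
  set c : ℂ := Complex.I * ((Real.pi : ℂ) / 4) with hc_def
  set w : Bool → ℂ :=
    fun b => (((2:ℝ) ^ (-(1:ℝ)/2) : ℝ) : ℂ) * (if b then Complex.exp (-Complex.I * γ) else 1)
    with hw_def
  -- the cost layer produces a product state
  have hcost : (NormedSpace.exp ((-Complex.I * (γ : ℂ)) • R)).mulVec u
      = qaoaPV (fun _ => w) := by
    rw [hR,
      show (-Complex.I * (γ : ℂ)) • Matrix.diagonal (fun z => (hammingWeight z : ℂ))
          = Matrix.diagonal (fun z => (-Complex.I * (γ : ℂ)) * (hammingWeight z : ℂ)) by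
        rw [← Matrix.diagonal_smul]; congr 1,
      Matrix.exp_diagonal, Pi.exp_def]
    funext z'
    rw [Matrix.mulVec_diagonal, hu, ← Complex.exp_eq_exp_ℂ]
    show Complex.exp (-Complex.I * (γ : ℂ) * (hammingWeight z' : ℂ))
        * (((2 : ℝ) ^ (-(n : ℝ) / 2) : ℝ) : ℂ) = ∏ i, w (z' i)
    rw [hw_def]
    rw [Finset.prod_mul_distrib, Finset.prod_const, Finset.card_univ, Fintype.card_fin,
      Finset.prod_ite, Finset.prod_const, Finset.prod_const_one, mul_one]
    have hcard : (Finset.univ.filter fun i => z' i = true).card = hammingWeight z' := rfl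
    rw [hcard, ← Complex.exp_nat_mul, ← pow_half_fact n,
      show ((hammingWeight z' : ℂ) * (-Complex.I * (γ : ℂ)))
          = (-Complex.I * (γ : ℂ) * (hammingWeight z' : ℂ)) by ring]
    exact mul_comm _ _
  -- the mixer is a noncommutative product of single-qubit gates
  have hpair : (↑(Finset.univ : Finset (Fin n)) : Set (Fin n)).Pairwise
      (Function.onFun Commute fun i => c • pauliX n i) :=
    fun i _ j _ _ => ((pauliX_comm i j).smul_left c).smul_right c
  have hmix : NormedSpace.exp (c • B')
      = Finset.univ.noncommProd (mixM c) (fun i _ j _ _ => mix_commute c i j) := by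
    rw [hB', Finset.smul_sum, Matrix.exp_sum_of_commute Finset.univ _ hpair]
    exact Finset.noncommProd_congr rfl (fun i _ => exp_smul_pauliX c i) _
  rw [hψf, ← Matrix.mulVec_mulVec, hcost, hmix, mix_prod_mulVec]
  show (∏ i, _) = _
  refine Finset.prod_congr rfl fun i _ => ?_
  simp only [Finset.mem_univ, if_true]
  have hwf : w false = (((2:ℝ) ^ (-(1:ℝ)/2) : ℝ) : ℂ) := by
    rw [hw_def]; simp
  have hwt : w true = (((2:ℝ) ^ (-(1:ℝ)/2) : ℝ) : ℂ) * Complex.exp (-Complex.I * γ) := by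
    rw [hw_def]; simp
  cases hzi : z i
  · show Complex.cosh c * w false + Complex.sinh c * w true = a false
    rw [ha_false, hc_def, cosh_I_pi4, sinh_I_pi4, hwf, hwt]
    linear_combination (1 + Complex.I * Complex.exp (-Complex.I * γ)) * half_fact
  · show Complex.cosh c * w true + Complex.sinh c * w false = a true
    rw [ha_true, hc_def, cosh_I_pi4, sinh_I_pi4, hwf, hwt]
    linear_combination (Complex.exp (-Complex.I * γ) + Complex.I) * half_fact
end

section
/- Fix n : ℕ with n ≥ 1. With B', R, u as in the ramp setup, let ψ_f = (Matrix.exp (I·(π/4)·B') * Matrix.exp (-I·(π/2)·R)).mulVec u. Then ‖ψ_f 0‖² = 1, where 0 denotes the all-false bitstring; i.e., QAOA1 with angles (β, γ) = (π/4, π/2) finds the global minimum of the Hamming ramp with probability 1. -/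
set_option maxHeartbeats 1000000

open Matrix Complex

/- auxiliary lemmas -/

lemma aux_flip_invol {n : ℕ} (z : Fin n → Bool) (i : Fin n) :
    Function.update (Function.update z i (!(z i))) i
      (!((Function.update z i (!(z i))) i)) = z := by
  simp [Function.update_self, Function.update_idem]

lemma aux_flip_comm {n : ℕ} (z : Fin n → Bool) {i j : Fin n} (h : i ≠ j) :
    Function.update (Function.update z i (!(z i))) j
        (!((Function.update z i (!(z i))) j)) =
      Function.update (Function.update z j (!(z j))) i
        (!((Function.update z j (!(z j))) i)) := by
  rw [Function.update_of_ne h.symm, Function.update_of_ne h, Function.update_comm h]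

lemma aux_pauliX_mulVec {n : ℕ} (i : Fin n) (w : (Fin n → Bool) → ℂ)
    (z : Fin n → Bool) :
    (pauliX n i).mulVec w z = w (Function.update z i (!(z i))) := by
  simp [Matrix.mulVec, dotProduct, pauliX, ite_mul, Finset.sum_ite_eq']

lemma aux_pauliX_mul {n : ℕ} (i j : Fin n) (z z' : Fin n → Bool) :
    (pauliX n i * pauliX n j) z z' =
      if z' = Function.update (Function.update z i (!(z i))) j
        (!((Function.update z i (!(z i))) j)) then 1 else 0 := by
  rw [Matrix.mul_apply]
  rw [Finset.sum_eq_single (Function.update z i (!(z i)))]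
  · simp [pauliX]
  · intro b _ hb
    simp [pauliX, hb]
  · simp

lemma aux_pauliX_comm {n : ℕ} (i j : Fin n) :
    pauliX n i * pauliX n j = pauliX n j * pauliX n i := by
  rcases eq_or_ne i j with rfl | h
  · rfl
  · ext z z'
    rw [aux_pauliX_mul, aux_pauliX_mul, aux_flip_comm z h]

lemma aux_pauliX_sq {n : ℕ} (i : Fin n) : pauliX n i * pauliX n i = 1 := by
  ext z z'
  rw [aux_pauliX_mul, aux_flip_invol, Matrix.one_apply]
  simp [eq_comm]

lemma aux_hw_flip {n : ℕ} (z : Fin n → Bool) (i : Fin n) :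
    hammingWeight (Function.update z i (!(z i))) + (if z i then 1 else 0)
      = hammingWeight z + (if z i then 0 else 1) := by
  have key : ∀ w : Fin n → Bool, hammingWeight w
      = (if w i = true then 1 else 0) + ∑ j ∈ ({i}ᶜ : Finset (Fin n)), (if w j = true then 1 else 0) := by
    intro w
    rw [hammingWeight, Finset.card_filter, Fintype.sum_eq_add_sum_compl i]
  rw [key, key z]
  have hs : ∑ j ∈ ({i}ᶜ : Finset (Fin n)),
      (if Function.update z i (!(z i)) j = true then 1 else 0)
      = ∑ j ∈ ({i}ᶜ : Finset (Fin n)), (if z j = true then 1 else 0) := by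
    refine Finset.sum_congr rfl fun j hj => ?_
    have : j ≠ i := by simpa using hj
    rw [Function.update_of_ne this]
  rw [hs, Function.update_self]
  cases hzi : z i <;> simp [hzi] <;> omega

lemma aux_hw_flip_true {n : ℕ} {z : Fin n → Bool} {i : Fin n} (h : z i = true) :
    hammingWeight z = hammingWeight (Function.update z i false) + 1 := by
  have := aux_hw_flip z i
  simp [h] at this
  omega

lemma aux_hw_flip_false {n : ℕ} {z : Fin n → Bool} {i : Fin n} (h : z i = false) :
    hammingWeight (Function.update z i true) = hammingWeight z + 1 := by
  have := aux_hw_flip z i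
  simp [h] at this
  omega

/-- exponential of `(I*t) • A` for an involution `A`. -/
lemma aux_exp_involution {N : Type*} [Fintype N] [DecidableEq N]
    (A : Matrix N N ℂ) (hA : A * A = 1) (t : ℂ) :
    NormedSpace.exp ((Complex.I * t) • A)
      = Complex.cos t • (1 : Matrix N N ℂ) + (Complex.sin t • (Complex.I • A)) := by
  have hA2 : ∀ k : ℕ, A ^ (2 * k) = 1 := by
    intro k
    rw [pow_mul, sq, hA, one_pow]
  have hIt : ∀ k : ℕ, (Complex.I * t) ^ (2 * k) = (-1 : ℂ) ^ k * t ^ (2 * k) := by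
    intro k
    rw [mul_pow, pow_mul, Complex.I_sq]
  have he : HasSum (fun k : ℕ => ((2 * k).factorial : ℂ)⁻¹ • ((Complex.I * t) • A) ^ (2 * k))
      (Complex.cos t • (1 : Matrix N N ℂ)) := by
    have hfun : (fun k : ℕ => ((2 * k).factorial : ℂ)⁻¹ • ((Complex.I * t) • A) ^ (2 * k))
        = fun k : ℕ => ((-1 : ℂ) ^ k * t ^ (2 * k) / ((2 * k).factorial : ℂ)) •
            (1 : Matrix N N ℂ) := by
      funext k
      rw [smul_pow, hA2, hIt, smul_smul]
      congr 1
      ring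
    rw [hfun]
    exact (Complex.hasSum_cos t).smul_const _
  have ho : HasSum (fun k : ℕ =>
        ((2 * k + 1).factorial : ℂ)⁻¹ • ((Complex.I * t) • A) ^ (2 * k + 1))
      (Complex.sin t • (Complex.I • A)) := by
    have hfun : (fun k : ℕ => ((2 * k + 1).factorial : ℂ)⁻¹ • ((Complex.I * t) • A) ^ (2 * k + 1))
        = fun k : ℕ => ((-1 : ℂ) ^ k * t ^ (2 * k + 1) / ((2 * k + 1).factorial : ℂ)) •
            (Complex.I • A) := by
      funext k
      have h1 : A ^ (2 * k + 1) = A := by rw [pow_succ, hA2, one_mul]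
      have h2 : (Complex.I * t) ^ (2 * k + 1)
          = ((-1 : ℂ) ^ k * t ^ (2 * k + 1)) * Complex.I := by
        rw [pow_succ, hIt]; ring
      rw [smul_pow, h1, h2, smul_smul, smul_smul]
      congr 1
      ring
    rw [hfun]
    exact (Complex.hasSum_sin t).smul_const _
  have h1 := HasSum.even_add_odd
    (f := fun nn : ℕ => ((nn).factorial : ℂ)⁻¹ • ((Complex.I * t) • A) ^ nn) he ho
  rw [NormedSpace.exp_eq_tsum ℂ]
  exact h1.tsum_eq

lemma aux_cos_pi4 : Complex.cos ((Real.pi : ℂ)/4) = ((Real.sqrt 2 / 2 : ℝ) : ℂ) := by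
  rw [show ((Real.pi : ℂ)/4) = ((Real.pi/4 : ℝ) : ℂ) by push_cast; ring,
    ← Complex.ofReal_cos, Real.cos_pi_div_four]

lemma aux_sin_pi4 : Complex.sin ((Real.pi : ℂ)/4) = ((Real.sqrt 2 / 2 : ℝ) : ℂ) := by
  rw [show ((Real.pi : ℂ)/4) = ((Real.pi/4 : ℝ) : ℂ) by push_cast; ring,
    ← Complex.ofReal_sin, Real.sin_pi_div_four]

lemma aux_key1 : Complex.cos ((Real.pi : ℂ)/4) * (-Complex.I)
    + Complex.sin ((Real.pi : ℂ)/4) * Complex.I = 0 := by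
  rw [aux_cos_pi4, aux_sin_pi4]; ring

lemma aux_key2 : Complex.cos ((Real.pi : ℂ)/4)
    + Complex.sin ((Real.pi : ℂ)/4) * Complex.I * (-Complex.I)
    = ((Real.sqrt 2 : ℝ) : ℂ) := by
  rw [aux_cos_pi4, aux_sin_pi4]
  have h : Complex.I * -Complex.I = 1 := by
    rw [mul_neg, Complex.I_mul_I]; ring
  push_cast
  linear_combination ((Real.sqrt 2 : ℂ)/2) * h

/-- the main induction -/
lemma aux_main {n : ℕ} (C : ℂ) (s : Finset (Fin n)) :
    (NormedSpace.exp (∑ i ∈ s, (Complex.I * ((Real.pi : ℂ) / 4)) • pauliX n i)).mulVec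
      (fun z => (-Complex.I) ^ (hammingWeight z) * C)
    = fun z => if ∀ i ∈ s, z i = false then
        ((Real.sqrt 2 : ℝ) : ℂ) ^ s.card * ((-Complex.I) ^ (hammingWeight z) * C)
      else 0 := by
  classical
  induction s using Finset.induction_on with
  | empty =>
    simp [NormedSpace.exp_zero, Matrix.one_mulVec]
  | @insert a s ha ih =>
    rw [Finset.sum_insert ha]
    have hcomm : Commute ((Complex.I * ((Real.pi : ℂ) / 4)) • pauliX n a)
        (∑ i ∈ s, (Complex.I * ((Real.pi : ℂ) / 4)) • pauliX n i) := by
      refine Commute.sum_right _ _ _ fun i _ => ?_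
      exact (((show Commute (pauliX n a) (pauliX n i) from aux_pauliX_comm a i).smul_left
        _).smul_right _)
    rw [Matrix.exp_add_of_commute _ _ hcomm, ← Matrix.mulVec_mulVec, ih,
      aux_exp_involution _ (aux_pauliX_sq a)]
    funext z
    rw [Matrix.add_mulVec, Matrix.smul_mulVec, Matrix.smul_mulVec,
      Matrix.smul_mulVec, Matrix.one_mulVec]
    simp only [Pi.add_apply, Pi.smul_apply, smul_eq_mul, aux_pauliX_mulVec]
    have hfz : ∀ i ∈ s, Function.update z a (!(z a)) i = z i := by
      intro i hi
      have hia : i ≠ a := by rintro rfl; exact ha hi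
      exact Function.update_of_ne hia _ _
    by_cases hP : ∀ i ∈ s, z i = false
    · have hPf : (∀ i ∈ s, Function.update z a (!(z a)) i = false) := by
        intro i hi; rw [hfz i hi]; exact hP i hi
      rw [if_pos hP, if_pos hPf]
      cases hza : z a with
      | true =>
        have hnot : ¬ (∀ i ∈ insert a s, z i = false) := by
          intro h
          have := h a (Finset.mem_insert_self a s)
          rw [hza] at this; exact Bool.noConfusion this
        rw [if_neg hnot]
        simp only [Bool.not_true]
        rw [aux_hw_flip_true hza]
        set m := hammingWeight (Function.update z a false)
        set K := ((Real.sqrt 2 : ℝ) : ℂ) ^ s.card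
        linear_combination (K * ((-Complex.I) ^ m * C)) * aux_key1
      | false =>
        have hyes : (∀ i ∈ insert a s, z i = false) := by
          intro i hi
          rcases Finset.mem_insert.mp hi with rfl | hi
          · exact hza
          · exact hP i hi
        rw [if_pos hyes]
        simp only [Bool.not_false]
        rw [aux_hw_flip_false hza, Finset.card_insert_of_notMem ha]
        set w := hammingWeight z
        set K := ((Real.sqrt 2 : ℝ) : ℂ) ^ s.card
        linear_combination (K * ((-Complex.I) ^ w * C)) * aux_key2
    · have hPf : ¬ (∀ i ∈ s, Function.update z a (!(z a)) i = false) := by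
        intro h
        exact hP fun i hi => by rw [← hfz i hi]; exact h i hi
      have hnot : ¬ (∀ i ∈ insert a s, z i = false) := by
        intro h; exact hP fun i hi => h i (Finset.mem_insert_of_mem hi)
      rw [if_neg hP, if_neg hPf, if_neg hnot]
      ring

lemma aux_exp_pi {ι : Type*} [Fintype ι] (v : ι → ℂ) :
    NormedSpace.exp v = fun i => Complex.exp (v i) := by
  rw [NormedSpace.exp_eq_tsum ℂ]
  refine HasSum.tsum_eq ?_
  refine Pi.hasSum.mpr fun i => ?_
  have h := NormedSpace.exp_series_hasSum_exp' (𝕂 := ℂ) (v i)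
  rw [← Complex.exp_eq_exp_ℂ] at h
  refine h.congr_fun fun nn => ?_
  simp [Pi.pow_apply]

lemma aux_exp_R {n : ℕ} :
    NormedSpace.exp ((-Complex.I * ((Real.pi : ℂ) / 2)) •
        (Matrix.diagonal fun z : Fin n → Bool => (hammingWeight z : ℂ)))
      = Matrix.diagonal (fun z => (-Complex.I) ^ (hammingWeight z)) := by
  rw [← Matrix.diagonal_smul, Matrix.exp_diagonal, aux_exp_pi]
  refine congrArg Matrix.diagonal (funext fun z => ?_)
  show Complex.exp (((-Complex.I * ((Real.pi : ℂ)/2)) •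
      fun z : Fin n → Bool => (hammingWeight z : ℂ)) z) = _
  rw [Pi.smul_apply, smul_eq_mul]
  rw [show -Complex.I * ((Real.pi : ℂ)/2) * (hammingWeight z : ℂ)
      = ((hammingWeight z : ℕ) : ℂ) * (((-(Real.pi/2) : ℝ) : ℂ) * Complex.I) by push_cast; ring]
  rw [Complex.exp_nat_mul, Complex.exp_mul_I]
  congr 1
  rw [show ((-(Real.pi/2) : ℝ) : ℂ) = -((Real.pi/2 : ℝ) : ℂ) by push_cast; ring]
  rw [Complex.cos_neg, Complex.sin_neg,
    ← Complex.ofReal_cos, ← Complex.ofReal_sin, Real.cos_pi_div_two, Real.sin_pi_div_two]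
  push_cast
  ring

/-- QAOA1 with angles `(β, γ) = (π/4, π/2)` finds the global minimum
(the all-false string) of the Hamming ramp with probability 1. -/
theorem qaoa1_ramp_success (n : ℕ) (hn : 1 ≤ n)
    (B' R : Matrix (Fin n → Bool) (Fin n → Bool) ℂ)
    (hB' : B' = ∑ i, pauliX n i)
    (hR : R = Matrix.diagonal fun z => (hammingWeight z : ℂ))
    (u : (Fin n → Bool) → ℂ)
    (hu : u = fun _ => (((2 : ℝ) ^ (-(n : ℝ) / 2) : ℝ) : ℂ))
    (ψf : (Fin n → Bool) → ℂ)
    (hψf : ψf = (NormedSpace.exp ((Complex.I * ((Real.pi : ℂ) / 4)) • B') *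
        NormedSpace.exp ((-Complex.I * ((Real.pi : ℂ) / 2)) • R)).mulVec u) :
    ‖ψf (fun _ => false)‖ ^ 2 = 1 := by
  classical
  subst hR hu hB' hψf
  set C : ℂ := (((2 : ℝ) ^ (-(n : ℝ) / 2) : ℝ) : ℂ) with hC
  have hv : (NormedSpace.exp ((-Complex.I * ((Real.pi : ℂ) / 2)) •
        (Matrix.diagonal fun z : Fin n → Bool => (hammingWeight z : ℂ)))).mulVec
        (fun _ => C)
      = fun z => (-Complex.I) ^ (hammingWeight z) * C := by
    funext z
    rw [aux_exp_R, Matrix.mulVec_diagonal]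
  have hsmul : ((Complex.I * ((Real.pi : ℂ) / 4)) • ∑ i, pauliX n i)
      = ∑ i, (Complex.I * ((Real.pi : ℂ) / 4)) • pauliX n i := by
    rw [Finset.smul_sum]
  have hψ : ((NormedSpace.exp ((Complex.I * ((Real.pi : ℂ) / 4)) • ∑ i, pauliX n i) *
        NormedSpace.exp ((-Complex.I * ((Real.pi : ℂ) / 2)) •
          (Matrix.diagonal fun z : Fin n → Bool => (hammingWeight z : ℂ)))).mulVec
        (fun _ => C)) (fun _ => false)
      = ((Real.sqrt 2 : ℝ) : ℂ) ^ n * C := by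
    rw [← Matrix.mulVec_mulVec, hv, hsmul, aux_main C Finset.univ]
    have h0 : hammingWeight (fun _ : Fin n => false) = 0 := by
      simp [hammingWeight]
    simp [h0, Finset.card_univ]
  rw [hψ]
  have hr : (Real.sqrt 2) ^ n * (2 : ℝ) ^ (-(n : ℝ)/2) = 1 := by
    rw [Real.sqrt_eq_rpow, ← Real.rpow_natCast ((2:ℝ) ^ ((1:ℝ)/2)) n,
      ← Real.rpow_mul (by norm_num : (0:ℝ) ≤ 2), ← Real.rpow_add (by norm_num : (0:ℝ) < 2),
      show (1:ℝ)/2 * (n:ℝ) + (-(n:ℝ)/2) = 0 by ring, Real.rpow_zero]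
  have hval : ((Real.sqrt 2 : ℝ) : ℂ) ^ n * C = 1 := by
    rw [hC, ← Complex.ofReal_pow, ← Complex.ofReal_mul, hr, Complex.ofReal_one]
  rw [hval]
  simp
end
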